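/- arXiv:0910.5394 — 2 statements merged into one kernel-verified Lean document; each statement's English description precedes it below -/
import Mathlib

section
/- Let D_{i−} = {x ∈ ℝ^{dn+2} : |x_i − x_{i+1}| ≥ x̆_-} and let x ∈ A_c satisfy |x_i − x_{i+1}| = x̆_-. Then, with α = r_- √3/2, the open ball of radius α centered at x − α n_{i−}(x) is disjoint from D_{i−}; i.e. D_{i−} has the Uniform Exterior Sphere property restricted to A_c with constant r_- √3/2. -/
open scoped RealInnerProductSpace

noncomputable section

variable {H : Type*} [NormedAddCommGroup H] [InnerProductSpace ℝ H]

/-- The set `N^D_{x,α}` of inward unit normal vectors to `D` at `x` with constant `α`. -/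
def normalSet (D : Set H) (x : H) (α : ℝ) : Set H :=
  {v | ‖v‖ = 1 ∧ Metric.ball (x - α • v) α ∩ D = ∅}

/-- The set `N^D_x = ⋃_{α>0} N^D_{x,α}` of inward unit normal vectors to `D` at `x`. -/
def normalCone (D : Set H) (x : H) : Set H :=
  ⋃ α ∈ Set.Ioi (0 : ℝ), normalSet D x α

/-- `D` satisfies the Uniform Exterior Sphere property with constant `α`. -/
def UES (D : Set H) (α : ℝ) : Prop :=
  ∀ x ∈ frontier D, normalCone D x = normalSet D x α ∧ (normalSet D x α).Nonempty

/-- `D` satisfies the Uniform Normal Cone property with constants `β`, `δ`. -/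
def UNC (D : Set H) (β δ : ℝ) : Prop :=
  ∀ x ∈ frontier D, ∃ l : H, ‖l‖ = 1 ∧
    ∀ y ∈ frontier D, ‖y - x‖ ≤ δ → ∀ v ∈ normalCone D y, ⟪v, l⟫ ≥ Real.sqrt (1 - β ^ 2)

/-- The configuration space `ℝ^{dn+2}` of chains of `n` particles in `ℝ^d` together with the
minimum and maximum bond lengths `(x̆₋, x̆₊)`, carrying the Euclidean (`L²`) norm. -/
abbrev CConf (d n : ℕ) : Type :=
  WithLp 2 ((PiLp 2 fun _ : Fin n => EuclideanSpace ℝ (Fin d)) × WithLp 2 (ℝ × ℝ))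

variable {d n : ℕ}

/-- Position of the `i`-th particle of the chain. -/
def cC (x : CConf d n) (i : Fin n) : EuclideanSpace ℝ (Fin d) := x.fst i

/-- Minimum allowed bond length `x̆₋`. -/
def cMin (x : CConf d n) : ℝ := x.snd.fst

/-- Maximum allowed bond length `x̆₊`. -/
def cMax (x : CConf d n) : ℝ := x.snd.snd

/-- Build a chain configuration from particle positions and the two bond-length bounds. -/
def mkC (f : Fin n → EuclideanSpace ℝ (Fin d)) (a b : ℝ) : CConf d n :=
  (WithLp.equiv 2 _).symm ((WithLp.equiv 2 _).symm f, (WithLp.equiv 2 _).symm (a, b))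

/-- The set `A_c` of allowed chain configurations. -/
def Ac (d n : ℕ) (rm rp : ℝ) : Set (CConf d n) :=
  {x | rm ≤ cMin x ∧ cMin x ≤ cMax x ∧ cMax x ≤ rp ∧
    ∀ (i : Fin n) (h : (i : ℕ) + 1 < n),
      cMin x ≤ ‖cC x i - cC x ⟨(i : ℕ) + 1, h⟩‖ ∧
        ‖cC x i - cC x ⟨(i : ℕ) + 1, h⟩‖ ≤ cMax x}

/-- The unit normal vector `n_{i−}(x)` to the constraint `|x_i − x_{i+1}| ≥ x̆₋`, at a
configuration `x` with `|x_i − x_{i+1}| = x̆₋ > 0`. -/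
def cnm (x : CConf d n) (i : Fin n) (h : (i : ℕ) + 1 < n) : CConf d n :=
  mkC (fun k =>
      if k = i then (cMin x * Real.sqrt 3)⁻¹ • (cC x i - cC x ⟨(i : ℕ) + 1, h⟩)
      else if k = ⟨(i : ℕ) + 1, h⟩ then
        (cMin x * Real.sqrt 3)⁻¹ • (cC x ⟨(i : ℕ) + 1, h⟩ - cC x i)
      else 0)
    (-(Real.sqrt 3)⁻¹) 0

/-- The unit normal vector `n_{i+}(x)` to the constraint `|x_i − x_{i+1}| ≤ x̆₊`, at a
configuration `x` with `|x_i − x_{i+1}| = x̆₊ > 0`. -/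
def cnp (x : CConf d n) (i : Fin n) (h : (i : ℕ) + 1 < n) : CConf d n :=
  mkC (fun k =>
      if k = i then (cMax x * Real.sqrt 3)⁻¹ • (cC x ⟨(i : ℕ) + 1, h⟩ - cC x i)
      else if k = ⟨(i : ℕ) + 1, h⟩ then
        (cMax x * Real.sqrt 3)⁻¹ • (cC x i - cC x ⟨(i : ℕ) + 1, h⟩)
      else 0)
    0 (Real.sqrt 3)⁻¹

/-- The unit normal vector `n₋ = (0,…,0,1,0)` to the constraint `x̆₋ ≥ r₋`. -/
def cnmin (d n : ℕ) : CConf d n := mkC 0 1 0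

/-- The unit normal vector `n₊ = (0,…,0,0,−1)` to the constraint `x̆₊ ≤ r₊`. -/
def cnmax (d n : ℕ) : CConf d n := mkC 0 0 (-1)

/-- The unit normal vector `n₌ = (0,…,0,−1/√2,1/√2)` to the constraint `x̆₋ ≤ x̆₊`. -/
def cneq (d n : ℕ) : CConf d n := mkC 0 (-(Real.sqrt 2)⁻¹) (Real.sqrt 2)⁻¹

end

/-- The bond-length lower-bound constraint set `D_{i−} = {x : |x_i − x_{i+1}| ≥ x̆₋}`. -/
def Dim (d n : ℕ) (i : Fin n) (h : (i : ℕ) + 1 < n) : Set (CConf d n) :=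
  {x | ‖cC x i - cC x ⟨(i : ℕ) + 1, h⟩‖ ≥ cMin x}

set_option maxHeartbeats 1000000 in
/-- If `x ∈ A_c` satisfies `|x_i − x_{i+1}| = x̆₋` then, with
`α = r₋√3/2`, the open ball of radius `α` centered at `x − α n_{i−}(x)` is disjoint from
`D_{i−}`: `D_{i−}` has the Uniform Exterior Sphere property restricted to `A_c` with constant
`r₋√3/2`. -/
theorem stmt_18 (d n : ℕ) (hd : 2 ≤ d) (hn : 2 ≤ n) (rm rp : ℝ)
    (h0 : 0 < rm) (hr : rm < rp) (i : Fin n) (h : (i : ℕ) + 1 < n)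
    (x : CConf d n) (hx : x ∈ Ac d n rm rp)
    (hcol : ‖cC x i - cC x ⟨(i : ℕ) + 1, h⟩‖ = cMin x) :
    Metric.ball (x - (rm * Real.sqrt 3 / 2) • cnm x i h) (rm * Real.sqrt 3 / 2) ∩
      Dim d n i h = ∅ := by
  obtain ⟨hrm, hmm, hmp, hbonds⟩ := hx
  have hs3 : (0:ℝ) < Real.sqrt 3 := by positivity
  have hs3sq : Real.sqrt 3 ^ 2 = 3 := Real.sq_sqrt (by norm_num)
  set α := rm * Real.sqrt 3 / 2 with hα
  have hα0 : 0 < α := by positivity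
  set m := cMin x with hm
  have hm0 : 0 < m := lt_of_lt_of_le h0 hrm
  have hmne : m ≠ 0 := ne_of_gt hm0
  set i1 : Fin n := ⟨(i : ℕ) + 1, h⟩ with hi1
  have hne : i ≠ i1 := by
    intro e
    have e2 : (i : ℕ) = (i : ℕ) + 1 := congrArg Fin.val e
    omega
  set a := cC x i - cC x i1 with ha
  set c := x - α • cnm x i h with hc
  -- components of the normal vector
  have hni : cC (cnm x i h) i = (m * Real.sqrt 3)⁻¹ • a := if_pos rfl
  have hni1 : cC (cnm x i h) i1 = (m * Real.sqrt 3)⁻¹ • (cC x i1 - cC x i) := by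
    have e : cC (cnm x i h) i1 =
        if i1 = i then (m * Real.sqrt 3)⁻¹ • a
        else if i1 = i1 then (m * Real.sqrt 3)⁻¹ • (cC x i1 - cC x i) else 0 := rfl
    rw [e, if_neg hne.symm, if_pos rfl]
  -- components of the center
  have hci : cC c i = cC x i - (α * (m * Real.sqrt 3)⁻¹) • a := by
    show cC x i - α • cC (cnm x i h) i = _
    rw [hni, smul_smul]
  have hci1 : cC c i1 = cC x i1 + (α * (m * Real.sqrt 3)⁻¹) • a := by
    show cC x i1 - α • cC (cnm x i h) i1 = _
    rw [hni1, ha]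
    match_scalars <;> ring
  have hβ : α * (Real.sqrt 3)⁻¹ = rm / 2 := by
    rw [hα]
    field_simp
  have hβm : α * (m * Real.sqrt 3)⁻¹ = rm / (2 * m) := by
    rw [hα]; field_simp
  have hcmin : cMin c = m + rm / 2 := by
    show m - α * (-(Real.sqrt 3)⁻¹) = _
    rw [mul_neg, hβ]; ring
  ext y
  simp only [Set.mem_inter_iff, Metric.mem_ball, Set.mem_empty_iff_false, iff_false, not_and]
  intro hdist hy
  have hy' : ‖cC y i - cC y i1‖ ≥ cMin y := hy
  set z := y - c with hz
  set u := cC z i with hu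
  set v := cC z i1 with hv
  set s := cMin z with hs
  -- decomposition of the bond vector
  have hB : cC y i - cC y i1 = (u - v) + (1 - rm / m) • a := by
    have e1 : u = cC y i - cC c i := rfl
    have e2 : v = cC y i1 - cC c i1 := rfl
    rw [e1, e2, hci, hci1, hβm, ha]
    match_scalars <;> field_simp <;> ring
  have hna : ‖(1 - rm / m) • a‖ = m - rm := by
    rw [norm_smul, hcol, Real.norm_eq_abs, abs_of_nonneg]
    · field_simp
    · rw [sub_nonneg, div_le_one hm0]; exact hrm
  have hcminy : cMin y = s + (m + rm / 2) := by
    have e : s = cMin y - cMin c := rfl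
    rw [e, hcmin]; ring
  -- key inequality from membership in Dim
  have key : 3 * rm / 2 ≤ ‖u‖ + ‖v‖ - s := by
    have h1 : ‖cC y i - cC y i1‖ ≤ ‖u‖ + ‖v‖ + (m - rm) := by
      rw [hB]
      calc ‖(u - v) + (1 - rm / m) • a‖ ≤ ‖u - v‖ + ‖(1 - rm / m) • a‖ := norm_add_le _ _
        _ ≤ (‖u‖ + ‖v‖) + (m - rm) := by rw [hna]; exact add_le_add_left (norm_sub_le _ _) _
    have h2 := hy'
    rw [hcminy] at h2
    linarith
  -- component norms bounded by total norm
  have hA : ‖u‖ ^ 2 + ‖v‖ ^ 2 + s ^ 2 ≤ ‖z‖ ^ 2 := by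
    have h1 : ‖z‖ ^ 2 = (∑ k, ‖z.fst k‖ ^ 2) + ‖z.snd‖ ^ 2 := by
      rw [WithLp.prod_norm_sq_eq_of_L2, PiLp.norm_sq_eq_of_L2]
    have h2 : ‖z.fst i‖ ^ 2 + ‖z.fst i1‖ ^ 2 ≤ ∑ k, ‖z.fst k‖ ^ 2 := by
      calc ‖z.fst i‖ ^ 2 + ‖z.fst i1‖ ^ 2
          = ∑ k ∈ ({i, i1} : Finset (Fin n)), ‖z.fst k‖ ^ 2 := (Finset.sum_pair (f := fun k => ‖z.fst k‖ ^ 2) hne).symm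
        _ ≤ ∑ k, ‖z.fst k‖ ^ 2 := Finset.sum_le_sum_of_subset_of_nonneg
            (Finset.subset_univ _) (fun _ _ _ => by positivity)
    have h3 : s ^ 2 ≤ ‖z.snd‖ ^ 2 := by
      rw [WithLp.prod_norm_sq_eq_of_L2]
      have e : ‖z.snd.fst‖ ^ 2 = s ^ 2 := by
        rw [Real.norm_eq_abs, sq_abs]; rfl
      nlinarith [sq_nonneg ‖z.snd.snd‖]
    have eu : u = z.fst i := rfl
    have ev : v = z.fst i1 := rfl
    rw [eu, ev]; linarith
  have hzlt : ‖z‖ < α := by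
    rw [hz, ← dist_eq_norm]; exact hdist
  have hzsq : ‖z‖ ^ 2 < α ^ 2 := by nlinarith [norm_nonneg z]
  have hα2 : α ^ 2 = 3 * rm ^ 2 / 4 := by
    rw [hα, div_pow, mul_pow, hs3sq]; ring
  nlinarith [key, hA, hzsq, hα2, sq_nonneg (‖u‖ - ‖v‖), sq_nonneg (‖u‖ + s),
    sq_nonneg (‖v‖ + s), norm_nonneg u, norm_nonneg v, h0]
end

section
/- Let x, y ∈ A_c satisfy |x_i − x_{i+1}| = x̆_- and |y_i − y_{i+1}| = y̆_- for some 1 ≤ i ≤ n−1. Then n_{i−}(x)·n_{i−}(y) ≥ 1 − 2|x − y|/(√3 r_-). Consequently, for any β ∈ (0,1), n_{i−}(x)·n_{i−}(y) ≥ √(1 − β²) as soon as |x − y| ≤ (r_- √3/2)(1 − √(1 − β²)), so D_{i−} = {x : |x_i − x_{i+1}| ≥ x̆_-} has the Uniform Normal Cone property restricted to A_c with any constant β ∈ (0,1) and δ = (r_- √3/4) β². -/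
open scoped RealInnerProductSpace

section Aux
variable {d n : ℕ}

lemma inner_cconf (x y : CConf d n) :
    ⟪x, y⟫ = (∑ k, ⟪cC x k, cC y k⟫) + (cMin x * cMin y + cMax x * cMax y) := by
  rw [WithLp.prod_inner_apply, PiLp.inner_apply, WithLp.prod_inner_apply]
  simp [RCLike.inner_apply, cC, cMin, cMax]
  ring

lemma cnm_inner_eq (x y : CConf d n) (i : Fin n) (h : (i : ℕ) + 1 < n) :
    ⟪cnm x i h, cnm y i h⟫ =
      2 * ((cMin x * Real.sqrt 3)⁻¹ * ((cMin y * Real.sqrt 3)⁻¹ *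
        ⟪cC x i - cC x ⟨(i : ℕ) + 1, h⟩, cC y i - cC y ⟨(i : ℕ) + 1, h⟩⟫)) + 1/3 := by
  have hne : i ≠ (⟨(i : ℕ) + 1, h⟩ : Fin n) := by
    intro he
    have := congrArg Fin.val he
    simp at this
  rw [inner_cconf]
  have hmin : cMin (cnm x i h) = -(Real.sqrt 3)⁻¹ := rfl
  have hmax : cMax (cnm x i h) = 0 := rfl
  have hmin' : cMin (cnm y i h) = -(Real.sqrt 3)⁻¹ := rfl
  have hmax' : cMax (cnm y i h) = 0 := rfl
  have ei : ∀ z : CConf d n, cC (cnm z i h) i =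
      (cMin z * Real.sqrt 3)⁻¹ • (cC z i - cC z ⟨(i : ℕ) + 1, h⟩) := by
    intro z
    have e : cC (cnm z i h) i =
        (if i = i then (cMin z * Real.sqrt 3)⁻¹ • (cC z i - cC z ⟨(i : ℕ) + 1, h⟩)
        else if i = ⟨(i : ℕ) + 1, h⟩ then
          (cMin z * Real.sqrt 3)⁻¹ • (cC z ⟨(i : ℕ) + 1, h⟩ - cC z i)
        else 0) := rfl
    rw [e, if_pos rfl]
  have ei1 : ∀ z : CConf d n, cC (cnm z i h) ⟨(i : ℕ) + 1, h⟩ =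
      (cMin z * Real.sqrt 3)⁻¹ • (cC z ⟨(i : ℕ) + 1, h⟩ - cC z i) := by
    intro z
    have e : cC (cnm z i h) ⟨(i : ℕ) + 1, h⟩ =
        (if (⟨(i : ℕ) + 1, h⟩ : Fin n) = i then
          (cMin z * Real.sqrt 3)⁻¹ • (cC z i - cC z ⟨(i : ℕ) + 1, h⟩)
        else if (⟨(i : ℕ) + 1, h⟩ : Fin n) = ⟨(i : ℕ) + 1, h⟩ then
          (cMin z * Real.sqrt 3)⁻¹ • (cC z ⟨(i : ℕ) + 1, h⟩ - cC z i)
        else 0) := rfl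
    rw [e, if_neg (Ne.symm hne), if_pos rfl]
  have hsum : (∑ k, ⟪cC (cnm x i h) k, cC (cnm y i h) k⟫) =
      ⟪cC (cnm x i h) i, cC (cnm y i h) i⟫ +
      ⟪cC (cnm x i h) ⟨(i : ℕ) + 1, h⟩, cC (cnm y i h) ⟨(i : ℕ) + 1, h⟩⟫ := by
    have step1 : (∑ k, ⟪cC (cnm x i h) k, cC (cnm y i h) k⟫) =
        ∑ k ∈ ({i, ⟨(i : ℕ) + 1, h⟩} : Finset (Fin n)),
          ⟪cC (cnm x i h) k, cC (cnm y i h) k⟫ := by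
      refine (Finset.sum_subset (Finset.subset_univ _) ?_).symm
      intro k _ hk
      simp only [Finset.mem_insert, Finset.mem_singleton, not_or] at hk
      have e : cC (cnm x i h) k =
          (if k = i then (cMin x * Real.sqrt 3)⁻¹ • (cC x i - cC x ⟨(i : ℕ) + 1, h⟩)
          else if k = ⟨(i : ℕ) + 1, h⟩ then
            (cMin x * Real.sqrt 3)⁻¹ • (cC x ⟨(i : ℕ) + 1, h⟩ - cC x i)
          else 0) := rfl
      rw [e, if_neg hk.1, if_neg hk.2, inner_zero_left]
    rw [step1, Finset.sum_pair hne]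
  rw [hsum, ei, ei, ei1, ei1, hmin, hmax, hmin', hmax',
    real_inner_smul_left, real_inner_smul_right,
    real_inner_smul_left, real_inner_smul_right]
  rw [show cC x ⟨(i : ℕ) + 1, h⟩ - cC x i = -(cC x i - cC x ⟨(i : ℕ) + 1, h⟩) from
    (neg_sub _ _).symm,
    show cC y ⟨(i : ℕ) + 1, h⟩ - cC y i = -(cC y i - cC y ⟨(i : ℕ) + 1, h⟩) from
    (neg_sub _ _).symm, inner_neg_neg]
  have h33 : Real.sqrt 3 * Real.sqrt 3 = 3 := Real.mul_self_sqrt (by norm_num)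
  rw [show (-(Real.sqrt 3)⁻¹ * -(Real.sqrt 3)⁻¹ : ℝ) = 1/3 from by
    rw [neg_mul_neg, ← mul_inv, h33]; norm_num]
  ring

lemma cnm_norm_one (rm : ℝ) (h0 : 0 < rm) (x : CConf d n) (i : Fin n)
    (h : (i : ℕ) + 1 < n) (hmx : rm ≤ cMin x)
    (hax : ‖cC x i - cC x ⟨(i : ℕ) + 1, h⟩‖ = cMin x) : ‖cnm x i h‖ = 1 := by
  have hm : 0 < cMin x := lt_of_lt_of_le h0 hmx
  have h33 : Real.sqrt 3 * Real.sqrt 3 = 3 := Real.mul_self_sqrt (by norm_num)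
  have h2 : ‖cnm x i h‖ ^ 2 = 1 := by
    rw [← real_inner_self_eq_norm_sq, cnm_inner_eq, real_inner_self_eq_norm_sq, hax]
    rw [show (cMin x * Real.sqrt 3)⁻¹ * ((cMin x * Real.sqrt 3)⁻¹ * cMin x ^ 2) =
      cMin x ^ 2 / ((Real.sqrt 3 * Real.sqrt 3) * (cMin x * cMin x)) from by ring, h33]
    field_simp
    ring
  have h3 : (‖cnm x i h‖ - 1) * (‖cnm x i h‖ + 1) = 0 := by nlinarith
  rcases mul_eq_zero.mp h3 with h4 | h4
  · linarith
  · nlinarith [norm_nonneg (cnm x i h)]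

lemma realKey (rm mx my c N : ℝ) (h0 : 0 < rm) (hmx : rm ≤ mx) (hmy : rm ≤ my)
    (hN : 0 ≤ N) (h1 : -(mx * my) ≤ c) (h2 : mx * my - c ≤ N ^ 2) :
    1 - 2 * N / (Real.sqrt 3 * rm) ≤ (2 * c / (mx * my) + 1) / 3 := by
  set S := Real.sqrt 3 with hSdef
  have hS2 : S ^ 2 = 3 := Real.sq_sqrt (by norm_num)
  have hSp : (0:ℝ) < S := Real.sqrt_pos.mpr (by norm_num)
  have hP : (0:ℝ) < mx * my := by nlinarith
  have hrP : rm ^ 2 ≤ mx * my := by nlinarith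
  have key : (mx * my - c) * rm ≤ S * N * (mx * my) := by
    rcases le_or_gt N (S * rm) with hc | hc
    · nlinarith [mul_le_mul_of_nonneg_right h2 h0.le,
        mul_le_mul_of_nonneg_right hc (mul_nonneg hN h0.le),
        mul_nonneg (mul_nonneg hSp.le hN) (sub_nonneg.mpr hrP)]
    · have h3rm : 3 * rm ≤ S * N := by nlinarith
      have hh := mul_le_mul_of_nonneg_left h3rm hP.le
      nlinarith [mul_le_mul_of_nonneg_right h1 h0.le]
  have expand : (2 * c / (mx * my) + 1) / 3 = 1 - 2 * (mx * my - c) / (3 * (mx * my)) := by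
    have hmx0 : mx ≠ 0 := (lt_of_lt_of_le h0 hmx).ne'
    have hmy0 : my ≠ 0 := (lt_of_lt_of_le h0 hmy).ne'
    field_simp; ring
  rw [expand, sub_le_sub_iff_left, div_le_div_iff₀ (by positivity) (by positivity)]
  have hkey2 := mul_le_mul_of_nonneg_left key hSp.le
  have h5 : S * (S * N * (mx * my)) = 3 * (N * (mx * my)) := by
    rw [show S * (S * N * (mx * my)) = S ^ 2 * (N * (mx * my)) from by ring, hS2]
  nlinarith [hkey2, h5]

lemma cnm_inner_ge (rm : ℝ) (h0 : 0 < rm) (i : Fin n) (h : (i : ℕ) + 1 < n)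
    (x y : CConf d n) (hmx : rm ≤ cMin x) (hmy : rm ≤ cMin y)
    (hax : ‖cC x i - cC x ⟨(i : ℕ) + 1, h⟩‖ = cMin x)
    (hby : ‖cC y i - cC y ⟨(i : ℕ) + 1, h⟩‖ = cMin y) :
    ⟪cnm x i h, cnm y i h⟫ ≥ 1 - 2 * ‖x - y‖ / (Real.sqrt 3 * rm) := by
  set i1 : Fin n := ⟨(i : ℕ) + 1, h⟩ with hi1
  have hne : i ≠ i1 := by
    intro he
    have := congrArg Fin.val he
    simp [hi1] at this
  set a := cC x i - cC x i1 with hadef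
  set b := cC y i - cC y i1 with hbdef
  set c := ⟪a, b⟫ with hcdef
  have hmxp : 0 < cMin x := lt_of_lt_of_le h0 hmx
  have hmyp : 0 < cMin y := lt_of_lt_of_le h0 hmy
  have h33 : Real.sqrt 3 * Real.sqrt 3 = 3 := Real.mul_self_sqrt (by norm_num)
  have habs : |c| ≤ cMin x * cMin y := by
    rw [← hax, ← hby]; exact abs_real_inner_le_norm a b
  have h1 : -(cMin x * cMin y) ≤ c := by
    have := neg_abs_le c; linarith
  have hz : ∀ k : Fin n, cC (x - y) k = cC x k - cC y k := fun _ => rfl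
  have habsub : a - b = cC (x - y) i - cC (x - y) i1 := by
    rw [hz, hz, hadef, hbdef]; abel
  have hab_le : ‖a - b‖ ≤ ‖cC (x - y) i‖ + ‖cC (x - y) i1‖ := by
    rw [habsub]; exact norm_sub_le _ _
  have hNsq : ‖cC (x - y) i‖ ^ 2 + ‖cC (x - y) i1‖ ^ 2 ≤ ‖x - y‖ ^ 2 := by
    have hxy := inner_cconf (x - y) (x - y)
    simp only [real_inner_self_eq_norm_sq] at hxy
    have hpair : ‖cC (x - y) i‖ ^ 2 + ‖cC (x - y) i1‖ ^ 2
        = ∑ k ∈ ({i, i1} : Finset (Fin n)), ‖cC (x - y) k‖ ^ 2 :=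
      (Finset.sum_pair (f := fun k => ‖cC (x - y) k‖ ^ 2) hne).symm
    have hsub : ∑ k ∈ ({i, i1} : Finset (Fin n)), ‖cC (x - y) k‖ ^ 2
        ≤ ∑ k, ‖cC (x - y) k‖ ^ 2 :=
      Finset.sum_le_sum_of_subset_of_nonneg (Finset.subset_univ _) (by
        intro k _ _
        positivity)
    nlinarith [mul_self_nonneg (cMin (x - y)), mul_self_nonneg (cMax (x - y))]
  have hd2 : ‖a - b‖ ^ 2 = cMin x ^ 2 - 2 * c + cMin y ^ 2 := by
    rw [← hax, ← hby, hcdef, norm_sub_sq_real]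
  have h2 : cMin x * cMin y - c ≤ ‖x - y‖ ^ 2 := by
    nlinarith [hab_le, norm_nonneg (a - b), norm_nonneg (cC (x - y) i),
      norm_nonneg (cC (x - y) i1), hNsq, hd2,
      sq_nonneg (cMin x - cMin y), sq_nonneg (‖cC (x - y) i‖ - ‖cC (x - y) i1‖),
      mul_self_le_mul_self (norm_nonneg (a - b)) hab_le]
  have hform : ⟪cnm x i h, cnm y i h⟫ = (2 * c / (cMin x * cMin y) + 1) / 3 := by
    rw [cnm_inner_eq, ← hi1, ← hadef, ← hbdef, ← hcdef]
    rw [show (cMin x * Real.sqrt 3)⁻¹ * ((cMin y * Real.sqrt 3)⁻¹ * c) =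
      c / ((Real.sqrt 3 * Real.sqrt 3) * (cMin x * cMin y)) from by ring, h33]
    field_simp
  rw [hform]
  exact realKey rm (cMin x) (cMin y) c ‖x - y‖ h0 hmx hmy (norm_nonneg _) h1 h2

lemma cnm_inner_beta (rm : ℝ) (h0 : 0 < rm) (i : Fin n) (h : (i : ℕ) + 1 < n)
    (x y : CConf d n) (hmx : rm ≤ cMin x) (hmy : rm ≤ cMin y)
    (hax : ‖cC x i - cC x ⟨(i : ℕ) + 1, h⟩‖ = cMin x)
    (hby : ‖cC y i - cC y ⟨(i : ℕ) + 1, h⟩‖ = cMin y)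
    (β : ℝ) (hβ : β ∈ Set.Ioo (0 : ℝ) 1)
    (hle : ‖x - y‖ ≤ rm * Real.sqrt 3 / 2 * (1 - Real.sqrt (1 - β ^ 2))) :
    ⟪cnm x i h, cnm y i h⟫ ≥ Real.sqrt (1 - β ^ 2) := by
  have hmain := cnm_inner_ge rm h0 i h x y hmx hmy hax hby
  have hSp : (0:ℝ) < Real.sqrt 3 := Real.sqrt_pos.mpr (by norm_num)
  have hstep : 2 * ‖x - y‖ / (Real.sqrt 3 * rm) ≤ 1 - Real.sqrt (1 - β ^ 2) := by
    rw [div_le_iff₀ (by positivity)]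
    nlinarith [hle]
  linarith

end Aux

/-- For `x, y ∈ A_c` with `|x_i − x_{i+1}| = x̆₋` and
`|y_i − y_{i+1}| = y̆₋`, one has `n_{i−}(x)·n_{i−}(y) ≥ 1 − 2|x−y|/(√3 r₋)`; consequently,
for any `β ∈ (0,1)`, `n_{i−}(x)·n_{i−}(y) ≥ √(1−β²)` as soon as
`|x−y| ≤ (r₋√3/2)(1 − √(1−β²))`, so `D_{i−}` has the Uniform Normal Cone property restricted
to `A_c` with any constant `β ∈ (0,1)` and `δ = (r₋√3/4)β²`. -/
theorem stmt_19 (d n : ℕ) (hd : 2 ≤ d) (hn : 2 ≤ n) (rm rp : ℝ)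
    (h0 : 0 < rm) (hr : rm < rp) (i : Fin n) (h : (i : ℕ) + 1 < n)
    (x y : CConf d n) (hx : x ∈ Ac d n rm rp) (hy : y ∈ Ac d n rm rp)
    (hcx : ‖cC x i - cC x ⟨(i : ℕ) + 1, h⟩‖ = cMin x)
    (hcy : ‖cC y i - cC y ⟨(i : ℕ) + 1, h⟩‖ = cMin y) :
    ⟪cnm x i h, cnm y i h⟫ ≥ 1 - 2 * ‖x - y‖ / (Real.sqrt 3 * rm) ∧
    (∀ β ∈ Set.Ioo (0 : ℝ) 1,
      ‖x - y‖ ≤ rm * Real.sqrt 3 / 2 * (1 - Real.sqrt (1 - β ^ 2)) →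
        ⟪cnm x i h, cnm y i h⟫ ≥ Real.sqrt (1 - β ^ 2)) ∧
    (∀ β ∈ Set.Ioo (0 : ℝ) 1, ∀ x' ∈ Ac d n rm rp,
      ‖cC x' i - cC x' ⟨(i : ℕ) + 1, h⟩‖ = cMin x' →
        ∃ l : CConf d n, ‖l‖ = 1 ∧
          ∀ y' ∈ Ac d n rm rp, ‖cC y' i - cC y' ⟨(i : ℕ) + 1, h⟩‖ = cMin y' →
            ‖y' - x'‖ ≤ rm * Real.sqrt 3 / 4 * β ^ 2 →
              ⟪cnm y' i h, l⟫ ≥ Real.sqrt (1 - β ^ 2)) := by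
  obtain ⟨hmx, -, -, -⟩ := hx
  obtain ⟨hmy, -, -, -⟩ := hy
  refine ⟨cnm_inner_ge rm h0 i h x y hmx hmy hcx hcy,
    fun β hβ hle => cnm_inner_beta rm h0 i h x y hmx hmy hcx hcy β hβ hle, ?_⟩
  intro β hβ x' hx' hcx'
  obtain ⟨hmx', -, -, -⟩ := hx'
  refine ⟨cnm x' i h, cnm_norm_one rm h0 x' i h hmx' hcx', ?_⟩
  intro y' hy' hcy' hdist
  obtain ⟨hmy', -, -, -⟩ := hy'
  have hSp : (0:ℝ) < Real.sqrt 3 := Real.sqrt_pos.mpr (by norm_num)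
  have hsq : Real.sqrt (1 - β ^ 2) ≤ 1 - β ^ 2 / 2 := by
    have h1 : (0:ℝ) ≤ 1 - β ^ 2 / 2 := by nlinarith [hβ.1, hβ.2]
    have h2 := Real.sqrt_le_sqrt (show (1:ℝ) - β ^ 2 ≤ (1 - β ^ 2 / 2) ^ 2 by nlinarith)
    rwa [Real.sqrt_sq h1] at h2
  have hle' : ‖y' - x'‖ ≤ rm * Real.sqrt 3 / 2 * (1 - Real.sqrt (1 - β ^ 2)) := by
    nlinarith [hdist, mul_nonneg (mul_nonneg h0.le hSp.le)
      (show (0:ℝ) ≤ 1 - Real.sqrt (1 - β ^ 2) - β ^ 2 / 2 by linarith)]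
  exact cnm_inner_beta rm h0 i h y' x' hmy' hmx' hcy' hcx' β hβ hle'
end
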